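/- Consider the parameterized multiobjective linear program with feasible set F(b) = {x ∈ ℝⁿ : ⟨aₜ,x⟩ ≤ bₜ, t = 1,…,m}, Pareto solution set S(b), and Pareto front P(b) = {(⟨c₁,x⟩,…,⟨c_q,x⟩) : x ∈ S(b)}. Assume that for every b with F(b) ≠ ∅ also S(b) ≠ ∅. Then the graph of the epigraphical Pareto front mapping E_P(b) := P(b) + ℝ₊^q, i.e., the set {(b,p) ∈ ℝᵐ × ℝ^q : p ∈ P(b) + ℝ₊^q}, is convex. -/

import Mathlib

/-- The dot product. -/
def dot {n : ℕ} (a x : Fin n → ℝ) : ℝ := ∑ i, a i * x i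

/-- Feasibility for the linear system `⟨aₜ, x⟩ ≤ bₜ`, `t = 1,…,m`. -/
def Feas {n m : ℕ} (a : Fin m → Fin n → ℝ) (b : Fin m → ℝ) (x : Fin n → ℝ) : Prop :=
  ∀ t, dot (a t) x ≤ b t

/-- Pareto-nondominated points of `F(b)` with respect to objectives `c₁,…,c_q`. -/
def Pareto {n m q : ℕ} (a : Fin m → Fin n → ℝ) (b : Fin m → ℝ)
    (c : Fin q → Fin n → ℝ) (x : Fin n → ℝ) : Prop :=
  Feas a b x ∧ ¬ ∃ y, Feas a b y ∧ (∀ j, dot (c j) y ≤ dot (c j) x) ∧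
    ∃ j, dot (c j) y < dot (c j) x

lemma dot_add_right {n : ℕ} (a x y : Fin n → ℝ) : dot a (x + y) = dot a x + dot a y := by
  simp [dot, mul_add, Finset.sum_add_distrib]

lemma dot_smul_right {n : ℕ} (k : ℝ) (a x : Fin n → ℝ) : dot a (k • x) = k * dot a x := by
  simp only [dot, Finset.mul_sum, Pi.smul_apply, smul_eq_mul]
  exact Finset.sum_congr rfl fun i _ => by ring

lemma dot_snoc {k : ℕ} (a : Fin (k + 1) → ℝ) (x : Fin k → ℝ) (s : ℝ) :
    dot a (Fin.snoc x s) = dot (Fin.init a) x + a (Fin.last k) * s := by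
  simp [dot, Fin.sum_univ_castSucc, Fin.init]

lemma dot_cons {n : ℕ} (h : ℝ) (r : Fin n → ℝ) (y : Fin (n + 1) → ℝ) :
    dot (Fin.cons h r) y = h * y 0 + dot r (Fin.tail y) := by
  simp [dot, Fin.sum_univ_succ, Fin.tail]

lemma dot_sum {n q : ℕ} (c : Fin q → Fin n → ℝ) (x : Fin n → ℝ) :
    dot (fun i => ∑ j, c j i) x = ∑ j, dot (c j) x := by
  simp only [dot, Finset.sum_mul]
  rw [Finset.sum_comm]

/-- One step of Fourier–Motzkin elimination: eliminating the last variable. -/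
lemma proj_step {k : ℕ} {ι : Type} [Fintype ι] (A : ι → Fin (k + 1) → ℝ) :
    ∃ (ι' : Type) (_ : Fintype ι') (A' : ι' → Fin k → ℝ) (B : (ι → ℝ) → ι' → ℝ),
      B 0 = 0 ∧ ∀ (b : ι → ℝ) (x' : Fin k → ℝ),
        (∀ t', dot (A' t') x' ≤ B b t') ↔ ∃ s, ∀ t, dot (A t) (Fin.snoc x' s) ≤ b t := by
  classical
  set α : ι → ℝ := fun t => A t (Fin.last k) with hα
  set r : ι → Fin k → ℝ := fun t => Fin.init (A t) with hr
  refine ⟨{t : ι // α t = 0} ⊕ ({t : ι // 0 < α t} × {t : ι // α t < 0}), inferInstance,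
    (fun t' => Sum.elim (fun t => r t.1)
      (fun pm => fun i => (α pm.1.1)⁻¹ * r pm.1.1 i - (α pm.2.1)⁻¹ * r pm.2.1 i) t'),
    (fun b t' => Sum.elim (fun t => b t.1)
      (fun pm => (α pm.1.1)⁻¹ * b pm.1.1 - (α pm.2.1)⁻¹ * b pm.2.1) t'), ?_, ?_⟩
  · funext t'
    cases t' <;> simp
  intro b x'
  have hdot : ∀ (p m : ι),
      dot (fun i => (α p)⁻¹ * r p i - (α m)⁻¹ * r m i) x'
        = (α p)⁻¹ * dot (r p) x' - (α m)⁻¹ * dot (r m) x' := by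
    intro p m
    simp only [dot, sub_mul, mul_assoc, Finset.sum_sub_distrib, Finset.mul_sum]
  constructor
  · intro h
    have hzero : ∀ t, α t = 0 → dot (r t) x' ≤ b t := fun t ht => h (Sum.inl ⟨t, ht⟩)
    set g : ι → ℝ := fun t => (α t)⁻¹ * (b t - dot (r t) x') with hg
    have hpair : ∀ p m, 0 < α p → α m < 0 → g m ≤ g p := by
      intro p m hp hm
      have := h (Sum.inr (⟨p, hp⟩, ⟨m, hm⟩))
      simp only [Sum.elim_inr] at this
      rw [hdot p m] at this
      simp only [hg, mul_sub]
      linarith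
    -- candidate value for the eliminated variable
    have key : ∀ s t, dot (A t) (Fin.snoc x' s) = dot (r t) x' + α t * s := by
      intro s t; rw [dot_snoc]
    have mulg : ∀ t, α t ≠ 0 → α t * g t = b t - dot (r t) x' := by
      intro t ht; simp only [hg]; rw [← mul_assoc, mul_inv_cancel₀ ht, one_mul]
    by_cases hLo : ∃ t, α t < 0
    · set Lo : Finset ι := Finset.univ.filter (fun t => α t < 0) with hLoSet
      have hLoNe : (Lo.image g).Nonempty := by
        obtain ⟨t, ht⟩ := hLo
        exact ⟨g t, Finset.mem_image_of_mem g (by simp [hLoSet, ht])⟩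
      set s := (Lo.image g).max' hLoNe with hs
      have hge : ∀ t, α t < 0 → g t ≤ s :=
        fun t ht => Finset.le_max' _ _ (Finset.mem_image_of_mem g (by simp [hLoSet, ht]))
      have hle : ∀ t, 0 < α t → s ≤ g t := by
        intro t ht
        apply Finset.max'_le
        intro y hy
        obtain ⟨m, hmLo, rfl⟩ := Finset.mem_image.mp hy
        have hm : α m < 0 := by simpa [hLoSet] using hmLo
        exact hpair t m ht hm
      refine ⟨s, fun t => ?_⟩
      rw [key s t]
      rcases lt_trichotomy (α t) 0 with ht | ht | ht
      · have h1 : α t * s ≤ α t * g t := mul_le_mul_of_nonpos_left (hge t ht) ht.le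
        have h2 := mulg t ht.ne
        linarith
      · have := hzero t ht
        rw [ht]; linarith
      · have h1 : α t * s ≤ α t * g t := mul_le_mul_of_nonneg_left (hle t ht) ht.le
        have h2 := mulg t ht.ne'
        linarith
    · by_cases hUp : ∃ t, 0 < α t
      · set Up : Finset ι := Finset.univ.filter (fun t => 0 < α t) with hUpSet
        have hUpNe : (Up.image g).Nonempty := by
          obtain ⟨t, ht⟩ := hUp
          exact ⟨g t, Finset.mem_image_of_mem g (by simp [hUpSet, ht])⟩
        set s := (Up.image g).min' hUpNe with hs
        have hle : ∀ t, 0 < α t → s ≤ g t :=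
          fun t ht => Finset.min'_le _ _ (Finset.mem_image_of_mem g (by simp [hUpSet, ht]))
        refine ⟨s, fun t => ?_⟩
        rw [key s t]
        rcases lt_trichotomy (α t) 0 with ht | ht | ht
        · exact absurd ⟨t, ht⟩ hLo
        · have := hzero t ht
          rw [ht]; linarith
        · have h1 : α t * s ≤ α t * g t := mul_le_mul_of_nonneg_left (hle t ht) ht.le
          have h2 := mulg t ht.ne'
          linarith
      · refine ⟨0, fun t => ?_⟩
        rw [key 0 t]
        have ht : α t = 0 := by
          rcases lt_trichotomy (α t) 0 with h | h | h
          · exact absurd ⟨t, h⟩ hLo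
          · exact h
          · exact absurd ⟨t, h⟩ hUp
        have := hzero t ht
        rw [ht]; linarith
  · rintro ⟨s, hs⟩ t'
    have key : ∀ t, dot (A t) (Fin.snoc x' s) = dot (r t) x' + α t * s := by
      intro t; rw [dot_snoc]
    rcases t' with ⟨t, ht⟩ | ⟨⟨p, hp⟩, ⟨m, hm⟩⟩
    · have := hs t
      rw [key t, ht] at this
      simpa using this
    · show dot (fun i => (α p)⁻¹ * r p i - (α m)⁻¹ * r m i) x'
          ≤ (α p)⁻¹ * b p - (α m)⁻¹ * b m
      rw [hdot p m]
      have h1 := hs p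
      have h2 := hs m
      rw [key p] at h1
      rw [key m] at h2
      have e1 : (α p)⁻¹ * dot (r p) x' + s ≤ (α p)⁻¹ * b p := by
        have := mul_le_mul_of_nonneg_left h1 (le_of_lt (inv_pos.mpr hp))
        have hne : α p ≠ 0 := ne_of_gt hp
        rw [mul_add, ← mul_assoc, inv_mul_cancel₀ hne, one_mul] at this
        linarith
      have e2 : (α m)⁻¹ * b m ≤ (α m)⁻¹ * dot (r m) x' + s := by
        have := mul_le_mul_of_nonpos_left h2 (le_of_lt (inv_neg''.mpr hm))
        have hne : α m ≠ 0 := ne_of_lt hm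
        rw [mul_add, ← mul_assoc, inv_mul_cancel₀ hne, one_mul] at this
        linarith
      linarith

/-- Minimizing the first coordinate over a nonempty polyhedron: either the minimum
is attained or there is a recession direction decreasing the first coordinate. -/
lemma min_first {n : ℕ} : ∀ {ι : Type} [Fintype ι] (A : ι → Fin (n + 1) → ℝ) (b : ι → ℝ),
    (∃ x, ∀ t, dot (A t) x ≤ b t) →
    (∃ x, (∀ t, dot (A t) x ≤ b t) ∧ ∀ y, (∀ t, dot (A t) y ≤ b t) → x 0 ≤ y 0) ∨
    (∃ d, (∀ t, dot (A t) d ≤ 0) ∧ d 0 < 0) := by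
  classical
  induction n with
  | zero =>
    intro ι _ A b hne
    obtain ⟨z, hz⟩ := hne
    have hdot1 : ∀ (a x : Fin 1 → ℝ), dot a x = a 0 * x 0 := by
      intro a x; simp [dot, Fin.sum_univ_one]
    by_cases hLo : ∃ t, A t 0 < 0
    · set Lo : Finset ι := Finset.univ.filter (fun t => A t 0 < 0) with hLoSet
      set g : ι → ℝ := fun t => b t / A t 0 with hg
      have hLoNe : (Lo.image g).Nonempty := by
        obtain ⟨t, ht⟩ := hLo
        exact ⟨g t, Finset.mem_image_of_mem g (by simp [hLoSet, ht])⟩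
      set L := (Lo.image g).max' hLoNe with hL
      have hLub : ∀ y : Fin 1 → ℝ, (∀ t, dot (A t) y ≤ b t) → L ≤ y 0 := by
        intro y hy
        apply Finset.max'_le
        intro v hv
        obtain ⟨τ, hτLo, rfl⟩ := Finset.mem_image.mp hv
        have hτ : A τ 0 < 0 := by simpa [hLoSet] using hτLo
        have := hy τ
        rw [hdot1] at this
        rw [hg, div_le_iff_of_neg hτ]
        nlinarith
      have hge : ∀ t, A t 0 < 0 → g t ≤ L :=
        fun t ht => Finset.le_max' _ _ (Finset.mem_image_of_mem g (by simp [hLoSet, ht]))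
      refine Or.inl ⟨fun _ => L, ?_, fun y hy => hLub y hy⟩
      intro t
      rw [hdot1]
      rcases lt_trichotomy (A t 0) 0 with ht | ht | ht
      · have h1 := hge t ht
        have h2 : A t 0 * g t = b t := by
          rw [hg]
          rw [mul_comm (A t 0) (b t / A t 0), div_mul_cancel₀ _ (ne_of_lt ht)]
        nlinarith
      · have := hz t
        rw [hdot1] at this
        rw [ht] at this ⊢
        simpa using this
      · have hLz : L ≤ z 0 := hLub z hz
        have := hz t
        rw [hdot1] at this
        nlinarith
    · push_neg at hLo
      refine Or.inr ⟨fun _ => -1, fun t => ?_, by norm_num⟩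
      rw [hdot1]
      have := hLo t
      nlinarith
  | succ n ih =>
    intro ι _ A b hne
    obtain ⟨ι', instι', A', B, hB0, hiff⟩ := proj_step A
    letI := instι'
    obtain ⟨x, hx⟩ := hne
    have hne' : ∃ x', ∀ t', dot (A' t') x' ≤ B b t' := by
      refine ⟨Fin.init x, (hiff b (Fin.init x)).mpr ⟨x (Fin.last (n + 1)), ?_⟩⟩
      intro t
      rw [Fin.snoc_init_self]
      exact hx t
    have hzero0 : ∀ (w : Fin (n + 1) → ℝ) (s : ℝ), (Fin.snoc w s : Fin (n + 2) → ℝ) 0 = w 0 := by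
      intro w s
      have : (0 : Fin (n + 2)) = Fin.castSucc (0 : Fin (n + 1)) := rfl
      rw [this, Fin.snoc_castSucc]
    rcases ih A' (B b) hne' with ⟨x', hx'f, hx'min⟩ | ⟨d', hd'f, hd'0⟩
    · obtain ⟨s, hs⟩ := (hiff b x').mp hx'f
      refine Or.inl ⟨Fin.snoc x' s, hs, ?_⟩
      intro y hy
      have hyp : ∀ t', dot (A' t') (Fin.init y) ≤ B b t' := by
        refine (hiff b (Fin.init y)).mpr ⟨y (Fin.last (n + 1)), ?_⟩
        intro t
        rw [Fin.snoc_init_self]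
        exact hy t
      have := hx'min (Fin.init y) hyp
      rw [hzero0]
      have hiy : Fin.init y 0 = y 0 := by
        have h0 : (0 : Fin (n + 2)) = Fin.castSucc (0 : Fin (n + 1)) := rfl
        simp [Fin.init, ← h0]
      linarith
    · have hd'f' : ∀ t', dot (A' t') d' ≤ B 0 t' := by
        intro t'
        rw [hB0]
        exact hd'f t'
      obtain ⟨s, hs⟩ := (hiff 0 d').mp hd'f'
      refine Or.inr ⟨Fin.snoc d' s, fun t => hs t, ?_⟩
      rw [hzero0]
      exact hd'0

/-- LP dichotomy: over a nonempty polyhedron, a linear objective either attains its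
minimum or there is a feasible recession direction strictly decreasing it. -/
lemma lp_dichotomy {n : ℕ} {ι : Type} [Fintype ι] (A : ι → Fin n → ℝ) (b : ι → ℝ)
    (c : Fin n → ℝ) (hne : ∃ x, ∀ t, dot (A t) x ≤ b t) :
    (∃ x, (∀ t, dot (A t) x ≤ b t) ∧ ∀ y, (∀ t, dot (A t) y ≤ b t) → dot c x ≤ dot c y) ∨
    (∃ d, (∀ t, dot (A t) d ≤ 0) ∧ dot c d < 0) := by
  classical
  obtain ⟨x, hx⟩ := hne
  have hfeas : ∀ (z : Fin n → ℝ), (∀ t, dot (A t) z ≤ b t) →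
      ∀ t? : Option ι,
        dot (Option.elim t? (Fin.cons (-1) c) (fun t => Fin.cons 0 (A t)))
          (Fin.cons (dot c z) z) ≤ Option.elim t? 0 b := by
    intro z hz t?
    cases t? with
    | none =>
      simp only [Option.elim]
      rw [dot_cons]
      simp [Fin.tail_cons]
    | some t =>
      simp only [Option.elim]
      rw [dot_cons]
      simp only [zero_mul, zero_add, Fin.tail_cons]
      exact hz t
  have hne' : ∃ y, ∀ t? : Option ι,
      dot (Option.elim t? (Fin.cons (-1) c) (fun t => Fin.cons 0 (A t))) y
        ≤ Option.elim t? 0 b :=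
    ⟨Fin.cons (dot c x) x, hfeas x hx⟩
  rcases min_first
      (fun t? : Option ι => Option.elim t? (Fin.cons (-1) c) (fun t => Fin.cons 0 (A t)))
      (fun t? : Option ι => Option.elim t? 0 b) hne' with
    ⟨yh, hyhf, hyhmin⟩ | ⟨dh, hdhf, hdh0⟩
  · refine Or.inl ⟨Fin.tail yh, ?_, ?_⟩
    · intro t
      have := hyhf (some t)
      simp only [Option.elim] at this
      rw [dot_cons] at this
      simpa using this
    · intro y hy
      have hobj : dot c (Fin.tail yh) ≤ yh 0 := by
        have := hyhf none
        simp only [Option.elim] at this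
        rw [dot_cons] at this
        linarith
      have := hyhmin (Fin.cons (dot c y) y) (hfeas y hy)
      simp only [Fin.cons_zero] at this
      linarith
  · refine Or.inr ⟨Fin.tail dh, ?_, ?_⟩
    · intro t
      have := hdhf (some t)
      simp only [Option.elim] at this
      rw [dot_cons] at this
      simpa using this
    · have := hdhf none
      simp only [Option.elim] at this
      rw [dot_cons] at this
      linarith

/-- Domination property: every feasible point is dominated by a Pareto point. -/
lemma dominate {n m q : ℕ} (a : Fin m → Fin n → ℝ) (c : Fin q → Fin n → ℝ)
    (hSne : ∀ b : Fin m → ℝ, (∃ x, Feas a b x) → ∃ x, Pareto a b c x)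
    (b : Fin m → ℝ) (x₀ : Fin n → ℝ) (hx₀ : Feas a b x₀) :
    ∃ x, Pareto a b c x ∧ ∀ j, dot (c j) x ≤ dot (c j) x₀ := by
  classical
  set A : (Fin m ⊕ Fin q) → Fin n → ℝ := Sum.elim a c with hA
  set B : (Fin m ⊕ Fin q) → ℝ := Sum.elim b (fun j => dot (c j) x₀) with hB
  set ch : Fin n → ℝ := fun i => ∑ j, c j i with hch
  have hne : ∃ x, ∀ t, dot (A t) x ≤ B t := by
    refine ⟨x₀, fun t => ?_⟩
    rcases t with t | j
    · exact hx₀ t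
    · simp [hA, hB]
  rcases lp_dichotomy A B ch hne with ⟨x, hxf, hxmin⟩ | ⟨d, hdf, hdneg⟩
  · have hxFeas : Feas a b x := fun t => hxf (Sum.inl t)
    have hxdom : ∀ j, dot (c j) x ≤ dot (c j) x₀ := fun j => hxf (Sum.inr j)
    refine ⟨x, ⟨hxFeas, ?_⟩, hxdom⟩
    rintro ⟨y, hyF, hyle, j₀, hylt⟩
    have hyfeas : ∀ t, dot (A t) y ≤ B t := by
      intro t
      rcases t with t | j
      · exact hyF t
      · exact le_trans (hyle j) (hxdom j)
    have hmin := hxmin y hyfeas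
    have hsum : dot ch y < dot ch x := by
      rw [hch, dot_sum, dot_sum]
      exact Finset.sum_lt_sum (fun j _ => hyle j) ⟨j₀, Finset.mem_univ j₀, hylt⟩
    linarith
  · exfalso
    have hdc : ∀ j, dot (c j) d ≤ 0 := fun j => hdf (Sum.inr j)
    have hda : ∀ t, dot (a t) d ≤ 0 := fun t => hdf (Sum.inl t)
    have hj₀ : ∃ j, dot (c j) d < 0 := by
      by_contra hcon
      push_neg at hcon
      have : ∀ j, dot (c j) d = 0 := fun j => le_antisymm (hdc j) (hcon j)
      rw [hch, dot_sum] at hdneg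
      simp [this] at hdneg
    obtain ⟨xt, hxtF, hxtP⟩ := hSne b ⟨x₀, hx₀⟩
    apply hxtP
    refine ⟨xt + d, ?_, ?_, ?_⟩
    · intro t
      rw [dot_add_right]
      have := hxtF t
      have := hda t
      linarith
    · intro j
      rw [dot_add_right]
      have := hdc j
      linarith
    · obtain ⟨j₀, hj₀⟩ := hj₀
      refine ⟨j₀, ?_⟩
      rw [dot_add_right]
      linarith

/-- the graph of the epigraphical Pareto front mapping
`E_P(b) = P(b) + ℝ₊^q` is convex, provided `S(b) ≠ ∅` whenever `F(b) ≠ ∅`. -/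
theorem stmt10 {n m q : ℕ} (a : Fin m → Fin n → ℝ) (c : Fin q → Fin n → ℝ)
    (hSne : ∀ b : Fin m → ℝ, (∃ x, Feas a b x) → ∃ x, Pareto a b c x) :
    Convex ℝ {bp : (Fin m → ℝ) × (Fin q → ℝ) |
      ∃ x u, Pareto a bp.1 c x ∧ (∀ j, 0 ≤ u j) ∧
        bp.2 = (fun j => dot (c j) x) + u} := by
  rintro ⟨b₁, p₁⟩ ⟨x₁, u₁, hP₁, hu₁, hp₁⟩ ⟨b₂, p₂⟩ ⟨x₂, u₂, hP₂, hu₂, hp₂⟩ θ₁ θ₂ hθ₁ hθ₂ hθsum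
  simp only [Set.mem_setOf_eq, Prod.smul_mk, Prod.mk_add_mk, smul_eq_mul] at *
  set b : Fin m → ℝ := θ₁ • b₁ + θ₂ • b₂ with hb
  set x : Fin n → ℝ := θ₁ • x₁ + θ₂ • x₂ with hx
  have hxFeas : Feas a b x := by
    intro t
    rw [hx, dot_add_right, dot_smul_right, dot_smul_right]
    have h1 := hP₁.1 t
    have h2 := hP₂.1 t
    have e1 : θ₁ * dot (a t) x₁ ≤ θ₁ * b₁ t := mul_le_mul_of_nonneg_left h1 hθ₁
    have e2 : θ₂ * dot (a t) x₂ ≤ θ₂ * b₂ t := mul_le_mul_of_nonneg_left h2 hθ₂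
    simp only [hb, Pi.add_apply, Pi.smul_apply, smul_eq_mul]
    linarith
  obtain ⟨xt, hxtP, hxtdom⟩ := dominate a c hSne b x hxFeas
  refine ⟨xt, fun j => θ₁ * p₁ j + θ₂ * p₂ j - dot (c j) xt, hxtP, ?_, ?_⟩
  · intro j
    show 0 ≤ θ₁ * p₁ j + θ₂ * p₂ j - dot (c j) xt
    have hxtj := hxtdom j
    have hxj : dot (c j) x = θ₁ * dot (c j) x₁ + θ₂ * dot (c j) x₂ := by
      rw [hx, dot_add_right, dot_smul_right, dot_smul_right]
    have hpj1 : p₁ j = dot (c j) x₁ + u₁ j := by rw [hp₁]; simp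
    have hpj2 : p₂ j = dot (c j) x₂ + u₂ j := by rw [hp₂]; simp
    have e1 : θ₁ * u₁ j ≥ 0 := mul_nonneg hθ₁ (hu₁ j)
    have e2 : θ₂ * u₂ j ≥ 0 := mul_nonneg hθ₂ (hu₂ j)
    rw [hpj1, hpj2]
    nlinarith [hxtj, hxj]
  · funext j
    simp only [Pi.add_apply, Pi.smul_apply, smul_eq_mul]
    ring
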